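/- Let f : ℝ → ℝ be continuously differentiable on an open interval (a,b), let T = Diag(t₁,…,tₙ) be a real diagonal n×n matrix with tᵢ ∈ (a,b) for all i, and let H be an n×n complex Hermitian matrix. Then the matrix-valued function α ↦ F(T + αH) is differentiable at α = 0 with derivative T_f ⊙ H, where ⊙ is the entrywise (Hadamard) product and T_f is the n×n matrix with entries [T_f]_{ij} = f^{[1]}(tᵢ, tⱼ). -/

import Mathlib

open Matrix

attribute [local instance] Matrix.normedAddCommGroup Matrix.normedSpace

/-- The matrix extension `F` of `f : ℝ → ℝ`: for Hermitian `A = U Diag(λ) U*`,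
`F(A) := U Diag(f(λᵢ)) U*` (junk value `0` if `A` is not Hermitian). -/
noncomputable def matExt {𝕜 : Type*} [RCLike 𝕜] {n : Type*} [Fintype n] [DecidableEq n]
    (f : ℝ → ℝ) (A : Matrix n n 𝕜) : Matrix n n 𝕜 :=
  if hA : A.IsHermitian then
    (hA.eigenvectorUnitary : Matrix n n 𝕜) *
      Matrix.diagonal (fun i => (f (hA.eigenvalues i) : 𝕜)) *
      star (hA.eigenvectorUnitary : Matrix n n 𝕜)
  else 0

/-- The first divided difference of `f`: `(f x − f y)/(x − y)` for `x ≠ y`, and `f'(x)`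
on the diagonal. -/
noncomputable def divDiff (f : ℝ → ℝ) (x y : ℝ) : ℝ :=
  if x = y then deriv f x else (f x - f y) / (x - y)

open Topology Filter

section Aux

variable {n : Type*} [Fintype n] [DecidableEq n] {B : Matrix n n ℂ}

lemma matExt_apply (f : ℝ → ℝ) (hB : B.IsHermitian) (i j : n) :
    matExt f B i j = ∑ k, (f (hB.eigenvalues k) : ℂ) *
      ((hB.eigenvectorUnitary : Matrix n n ℂ) i k *
        (starRingEnd ℂ) ((hB.eigenvectorUnitary : Matrix n n ℂ) j k)) := by
  rw [matExt, dif_pos hB, Matrix.mul_apply]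
  refine Finset.sum_congr rfl fun k _ => ?_
  rw [Matrix.mul_diagonal, Matrix.star_apply]
  ring_nf
  rfl

lemma unit_row (hB : B.IsHermitian) (i j : n) :
    ∑ k, (hB.eigenvectorUnitary : Matrix n n ℂ) i k *
      (starRingEnd ℂ) ((hB.eigenvectorUnitary : Matrix n n ℂ) j k)
      = if i = j then 1 else 0 := by
  have h := Matrix.mem_unitaryGroup_iff.mp hB.eigenvectorUnitary.2
  have := congrFun (congrFun h i) j
  rw [Matrix.mul_apply] at this
  simpa [Matrix.one_apply, Matrix.star_apply] using this

lemma unit_col (hB : B.IsHermitian) (k : n) :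
    ∑ i, Complex.normSq ((hB.eigenvectorUnitary : Matrix n n ℂ) i k) = 1 := by
  have h := Matrix.mem_unitaryGroup_iff'.mp hB.eigenvectorUnitary.2
  have h1 := congrFun (congrFun h k) k
  rw [Matrix.mul_apply] at h1
  have h2 : ∑ i, (starRingEnd ℂ) ((hB.eigenvectorUnitary : Matrix n n ℂ) i k) *
      (hB.eigenvectorUnitary : Matrix n n ℂ) i k = 1 := by
    simpa [Matrix.one_apply, Matrix.star_apply] using h1
  have h3 : (∑ i, (starRingEnd ℂ) ((hB.eigenvectorUnitary : Matrix n n ℂ) i k) *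
      (hB.eigenvectorUnitary : Matrix n n ℂ) i k).re = 1 := by rw [h2]; rfl
  rw [Complex.re_sum] at h3
  rw [← h3]
  refine Finset.sum_congr rfl fun i _ => ?_
  rw [mul_comm, Complex.mul_conj]
  simp

lemma eigen_eq (hB : B.IsHermitian) (i k : n) :
    ∑ m, B i m * (hB.eigenvectorUnitary : Matrix n n ℂ) m k
      = (hB.eigenvalues k : ℂ) * (hB.eigenvectorUnitary : Matrix n n ℂ) i k := by
  have h0 : star (hB.eigenvectorUnitary : Matrix n n ℂ) * B * (hB.eigenvectorUnitary : Matrix n n ℂ)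
      = Matrix.diagonal (RCLike.ofReal ∘ hB.eigenvalues) := by
    have := hB.conjStarAlgAut_star_eigenvectorUnitary
    rwa [Unitary.conjStarAlgAut_star_apply] at this
  have h : B * (hB.eigenvectorUnitary : Matrix n n ℂ)
      = (hB.eigenvectorUnitary : Matrix n n ℂ) *
        Matrix.diagonal (RCLike.ofReal ∘ hB.eigenvalues) := by
    calc B * (hB.eigenvectorUnitary : Matrix n n ℂ)
        = ((hB.eigenvectorUnitary : Matrix n n ℂ) * star (hB.eigenvectorUnitary : Matrix n n ℂ))
          * B * (hB.eigenvectorUnitary : Matrix n n ℂ) := by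
          rw [Matrix.mem_unitaryGroup_iff.mp hB.eigenvectorUnitary.2, Matrix.one_mul]
      _ = (hB.eigenvectorUnitary : Matrix n n ℂ) *
          (star (hB.eigenvectorUnitary : Matrix n n ℂ) * B * (hB.eigenvectorUnitary : Matrix n n ℂ)) := by
          rw [Matrix.mul_assoc, Matrix.mul_assoc, Matrix.mul_assoc]
      _ = _ := by rw [h0]
  have := congrFun (congrFun h i) k
  rw [Matrix.mul_apply, Matrix.mul_apply] at this
  simp only [Matrix.diagonal_apply, Function.comp_apply] at this
  rw [this]
  simp only [mul_ite, mul_zero]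
  rw [Finset.sum_ite_eq' Finset.univ k]
  simp [mul_comm]

lemma divDiff_key (g : ℝ → ℝ) (x y : ℝ) : g y - g x = divDiff g x y * (y - x) := by
  rcases eq_or_ne x y with h | h
  · subst h; simp
  · rw [divDiff, if_neg h]
    field_simp [sub_ne_zero.mpr h]
    ring


lemma unit_row_normSq (hB : B.IsHermitian) (i : n) :
    ∑ k, Complex.normSq ((hB.eigenvectorUnitary : Matrix n n ℂ) i k) = 1 := by
  have h1 := unit_row hB i i
  rw [if_pos rfl] at h1
  have h3 : (∑ k, (hB.eigenvectorUnitary : Matrix n n ℂ) i k *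
      (starRingEnd ℂ) ((hB.eigenvectorUnitary : Matrix n n ℂ) i k)).re = 1 := by rw [h1]; rfl
  rw [Complex.re_sum] at h3
  rw [← h3]
  refine Finset.sum_congr rfl fun k _ => ?_
  rw [Complex.mul_conj]
  simp

lemma matExt_entry_eq (g : ℝ → ℝ) (t : n → ℝ) (H : Matrix n n ℂ) (α : ℝ)
    (hB : (Matrix.diagonal (fun i => (t i:ℂ)) + (α:ℂ) • H).IsHermitian) (i j : n) :
    matExt g (Matrix.diagonal (fun i => (t i:ℂ)) + (α:ℂ) • H) i j
      = (g (t i) : ℂ) * (if i = j then 1 else 0)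
        + (α:ℂ) * ∑ m, H i m *
            matExt (fun x => divDiff g (t i) x)
              (Matrix.diagonal (fun i => (t i:ℂ)) + (α:ℂ) • H) m j := by
  set B := Matrix.diagonal (fun i => (t i:ℂ)) + (α:ℂ) • H with hBdef
  set U : Matrix n n ℂ := (hB.eigenvectorUnitary : Matrix n n ℂ) with hU
  have key : ∀ k, ((hB.eigenvalues k : ℂ) - (t i : ℂ)) * U i k
      = (α:ℂ) * ∑ m, H i m * U m k := by
    intro k
    have h1 := eigen_eq hB i k
    have h2 : ∑ m, B i m * U m k
        = (t i : ℂ) * U i k + (α:ℂ) * ∑ m, H i m * U m k := by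
      simp only [hBdef, Matrix.add_apply, Matrix.smul_apply, smul_eq_mul,
        Matrix.diagonal_apply, add_mul, ite_mul, zero_mul, Finset.sum_add_distrib,
        Finset.sum_ite_eq, Finset.mem_univ, if_true, Finset.mul_sum, mul_assoc]
    have h3 := h1.symm.trans h2
    linear_combination h3
  have hrhs : ∑ m, H i m * matExt (fun x => divDiff g (t i) x) B m j
      = ∑ k, (divDiff g (t i) (hB.eigenvalues k) : ℂ) *
          ((∑ m, H i m * U m k) * (starRingEnd ℂ) (U j k)) := by
    simp only [matExt_apply _ hB, Finset.mul_sum]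
    rw [Finset.sum_comm]
    refine Finset.sum_congr rfl fun k _ => ?_
    rw [Finset.sum_mul, Finset.mul_sum]
    refine Finset.sum_congr rfl fun m _ => ?_
    ring
  rw [matExt_apply g hB i j, ← unit_row hB i j, hrhs, Finset.mul_sum, Finset.mul_sum,
    ← Finset.sum_add_distrib]
  refine Finset.sum_congr rfl fun k _ => ?_
  have E1 : ((g (hB.eigenvalues k) : ℂ)) - (g (t i) : ℂ)
      = (divDiff g (t i) (hB.eigenvalues k) : ℂ) * ((hB.eigenvalues k : ℂ) - (t i : ℂ)) := by
    have := divDiff_key g (t i) (hB.eigenvalues k)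
    have := congrArg (Complex.ofReal) this
    push_cast at this
    linear_combination this
  have E2 := key k
  linear_combination (U i k * (starRingEnd ℂ) (U j k)) * E1
    + ((divDiff g (t i) (hB.eigenvalues k) : ℂ) * (starRingEnd ℂ) (U j k)) * E2

lemma matExt_entry_dist (g h : ℝ → ℝ) (hB : B.IsHermitian) (ε : ℝ) (hε : 0 ≤ ε)
    (hgh : ∀ k, |g (hB.eigenvalues k) - h (hB.eigenvalues k)| ≤ ε) (i j : n) :
    ‖matExt g B i j - matExt h B i j‖ ≤ ε := by
  set U : Matrix n n ℂ := (hB.eigenvectorUnitary : Matrix n n ℂ) with hU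
  rw [matExt_apply g hB, matExt_apply h hB, ← Finset.sum_sub_distrib]
  have hre : ∀ k, (g (hB.eigenvalues k) : ℂ) * (U i k * (starRingEnd ℂ) (U j k))
      - (h (hB.eigenvalues k) : ℂ) * (U i k * (starRingEnd ℂ) (U j k))
      = ((g (hB.eigenvalues k) - h (hB.eigenvalues k) : ℝ) : ℂ)
        * (U i k * (starRingEnd ℂ) (U j k)) := by
    intro k; push_cast; ring
  calc ‖∑ k, ((g (hB.eigenvalues k) : ℂ) * (U i k * (starRingEnd ℂ) (U j k))
          - (h (hB.eigenvalues k) : ℂ) * (U i k * (starRingEnd ℂ) (U j k)))‖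
      ≤ ∑ k, ‖(g (hB.eigenvalues k) : ℂ) * (U i k * (starRingEnd ℂ) (U j k))
          - (h (hB.eigenvalues k) : ℂ) * (U i k * (starRingEnd ℂ) (U j k))‖ :=
        norm_sum_le _ _
    _ ≤ ∑ k, ε * (‖U i k‖ * ‖U j k‖) := by
        refine Finset.sum_le_sum fun k _ => ?_
        rw [hre k, norm_mul, norm_mul, Complex.norm_real, Real.norm_eq_abs, Complex.norm_conj]
        exact mul_le_mul_of_nonneg_right (hgh k)
          (mul_nonneg (norm_nonneg _) (norm_nonneg _))
    _ = ε * ∑ k, ‖U i k‖ * ‖U j k‖ := by rw [Finset.mul_sum]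
    _ ≤ ε * 1 := by
        refine mul_le_mul_of_nonneg_left ?_ hε
        calc ∑ k, ‖U i k‖ * ‖U j k‖
            ≤ Real.sqrt (∑ k, ‖U i k‖ ^ 2)
              * Real.sqrt (∑ k, ‖U j k‖ ^ 2) :=
              Real.sum_mul_le_sqrt_mul_sqrt _ _ _
          _ = 1 := by
              have e1 : ∑ k, ‖U i k‖ ^ 2 = 1 := by
                rw [← unit_row_normSq hB i]
                exact Finset.sum_congr rfl fun k _ => Complex.sq_norm _
              have e2 : ∑ k, ‖U j k‖ ^ 2 = 1 := by
                rw [← unit_row_normSq hB j]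
                exact Finset.sum_congr rfl fun k _ => Complex.sq_norm _
              rw [e1, e2, Real.sqrt_one, mul_one]
    _ = ε := mul_one ε


lemma eigenvalues_loc (t : n → ℝ) (H : Matrix n n ℂ) (α : ℝ)
    (hB : (Matrix.diagonal (fun i => (t i:ℂ)) + (α:ℂ) • H).IsHermitian) (k : n) :
    ∃ w : n → ℝ, (∀ i, 0 ≤ w i) ∧ (∑ i, w i = 1) ∧
      |hB.eigenvalues k - ∑ i, t i * w i| ≤ |α| * ∑ m, ∑ i, ‖H i m‖ := by
  set B := Matrix.diagonal (fun i => (t i:ℂ)) + (α:ℂ) • H with hBdef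
  set U : Matrix n n ℂ := (hB.eigenvectorUnitary : Matrix n n ℂ) with hU
  set w : n → ℝ := fun i => Complex.normSq (U i k) with hw
  have hw0 : ∀ i, 0 ≤ w i := fun i => Complex.normSq_nonneg _
  have hw1 : ∑ i, w i = 1 := unit_col hB k
  have habsU : ∀ i, ‖U i k‖ ≤ 1 := by
    intro i
    have h1 : Complex.normSq (U i k) ≤ 1 := by
      rw [← hw1]
      exact Finset.single_le_sum (fun i _ => hw0 i) (Finset.mem_univ i)
    have h2 := Complex.sq_norm (U i k)
    nlinarith [norm_nonneg (U i k)]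
  set S : ℂ := ∑ m, ∑ i, (starRingEnd ℂ) (U i k) * H i m * U m k with hS
  -- complex identity
  have ent : ∑ m, (∑ i, (starRingEnd ℂ) (U i k) * B i m) * U m k = (hB.eigenvalues k : ℂ) := by
    have h0 : star (hB.eigenvectorUnitary : Matrix n n ℂ) * B * (hB.eigenvectorUnitary : Matrix n n ℂ)
        = Matrix.diagonal (RCLike.ofReal ∘ hB.eigenvalues) := by
      have := hB.conjStarAlgAut_star_eigenvectorUnitary
      rwa [Unitary.conjStarAlgAut_star_apply] at this
    have h1 := congrFun (congrFun h0 k) k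
    rw [Matrix.mul_apply] at h1
    simp only [Matrix.mul_apply, Matrix.star_apply, Matrix.diagonal_apply_eq,
      Function.comp_apply] at h1
    exact h1
  have hsplit : ∀ m i, (starRingEnd ℂ) (U i k) * B i m * U m k
      = (if i = m then (t i:ℂ) * ((starRingEnd ℂ) (U i k) * U i k) else 0)
        + (α:ℂ) * ((starRingEnd ℂ) (U i k) * H i m * U m k) := by
    intro m i
    rw [hBdef]
    simp only [Matrix.add_apply, Matrix.smul_apply, smul_eq_mul, Matrix.diagonal_apply]
    split_ifs with h
    · subst h; ring
    · ring
  have identity : (hB.eigenvalues k : ℂ)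
      = ∑ i, (t i:ℂ) * ((starRingEnd ℂ) (U i k) * U i k) + (α:ℂ) * S := by
    rw [← ent]
    calc ∑ m, (∑ i, (starRingEnd ℂ) (U i k) * B i m) * U m k
        = ∑ m, ∑ i, (starRingEnd ℂ) (U i k) * B i m * U m k := by
          exact Finset.sum_congr rfl fun m _ => Finset.sum_mul _ _ _
      _ = ∑ m, ∑ i, ((if i = m then (t i:ℂ) * ((starRingEnd ℂ) (U i k) * U i k) else 0)
            + (α:ℂ) * ((starRingEnd ℂ) (U i k) * H i m * U m k)) := by
          exact Finset.sum_congr rfl fun m _ => Finset.sum_congr rfl fun i _ => hsplit m i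
      _ = ∑ m, ((t m:ℂ) * ((starRingEnd ℂ) (U m k) * U m k)
            + (α:ℂ) * ∑ i, (starRingEnd ℂ) (U i k) * H i m * U m k) := by
          refine Finset.sum_congr rfl fun m _ => ?_
          rw [Finset.sum_add_distrib, Finset.sum_ite_eq' Finset.univ m, Finset.mul_sum]
          simp
      _ = _ := by rw [Finset.sum_add_distrib, hS, Finset.mul_sum]
  have hC : ((hB.eigenvalues k - ∑ i, t i * w i : ℝ) : ℂ) = (α:ℂ) * S := by
    push_cast
    have e1 : ∑ x, (t x : ℂ) * (w x : ℂ)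
        = ∑ i, (t i:ℂ) * ((starRingEnd ℂ) (U i k) * U i k) := by
      refine Finset.sum_congr rfl fun i _ => ?_
      rw [mul_comm ((starRingEnd ℂ) (U i k)) (U i k), Complex.mul_conj]
    rw [e1]
    linear_combination identity
  have habs := congrArg (‖·‖) hC
  rw [Complex.norm_real, norm_mul, Complex.norm_real, Real.norm_eq_abs, Real.norm_eq_abs] at habs
  refine ⟨w, hw0, hw1, ?_⟩
  show |hB.eigenvalues k - ∑ i, t i * w i| ≤ _
  rw [habs]
  refine mul_le_mul_of_nonneg_left ?_ (abs_nonneg α)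
  calc ‖S‖ ≤ ∑ m, ‖∑ i, (starRingEnd ℂ) (U i k) * H i m * U m k‖ :=
        norm_sum_le _ _
    _ ≤ ∑ m, ∑ i, ‖(starRingEnd ℂ) (U i k) * H i m * U m k‖ :=
        Finset.sum_le_sum fun m _ => norm_sum_le _ _
    _ ≤ ∑ m, ∑ i, ‖H i m‖ := by
        refine Finset.sum_le_sum fun m _ => Finset.sum_le_sum fun i _ => ?_
        rw [norm_mul, norm_mul, Complex.norm_conj]
        calc ‖U i k‖ * ‖H i m‖ * ‖U m k‖
            ≤ 1 * ‖H i m‖ * 1 := by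
              gcongr
              exacts [habsU i, habsU m]
          _ = ‖H i m‖ := by ring


lemma eigen_eq_conj (hB : B.IsHermitian) (j k : n) :
    ∑ m, (starRingEnd ℂ) ((hB.eigenvectorUnitary : Matrix n n ℂ) m k) * B m j
      = (hB.eigenvalues k : ℂ) *
        (starRingEnd ℂ) ((hB.eigenvectorUnitary : Matrix n n ℂ) j k) := by
  have h1 := congrArg (starRingEnd ℂ) (eigen_eq hB j k)
  rw [map_sum, _root_.map_mul, Complex.conj_ofReal] at h1
  rw [← h1]
  refine Finset.sum_congr rfl fun m _ => ?_
  rw [_root_.map_mul, mul_comm]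
  congr 1
  have := congrFun (congrFun hB.symm j) m
  rw [Matrix.conjTranspose_apply] at this
  rw [this, Complex.star_def, Complex.conj_conj]

lemma matExt_add_fun (g h : ℝ → ℝ) (hB : B.IsHermitian) :
    matExt (fun x => g x + h x) B = matExt g B + matExt h B := by
  ext i j
  rw [Matrix.add_apply, matExt_apply _ hB, matExt_apply g hB, matExt_apply h hB,
    ← Finset.sum_add_distrib]
  refine Finset.sum_congr rfl fun k _ => ?_
  push_cast
  ring

lemma matExt_const (c : ℝ) (hB : B.IsHermitian) :
    matExt (fun _ => c) B = (c : ℂ) • (1 : Matrix n n ℂ) := by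
  ext i j
  rw [matExt_apply _ hB, Matrix.smul_apply, Matrix.one_apply, ← Finset.mul_sum, unit_row hB i j]
  simp

lemma matExt_mul_id (g : ℝ → ℝ) (hB : B.IsHermitian) :
    matExt (fun x => g x * x) B = matExt g B * B := by
  ext i j
  rw [Matrix.mul_apply, matExt_apply _ hB]
  have : ∀ m, matExt g B i m * B m j
      = ∑ k, (g (hB.eigenvalues k) : ℂ) *
          ((hB.eigenvectorUnitary : Matrix n n ℂ) i k *
            (starRingEnd ℂ) ((hB.eigenvectorUnitary : Matrix n n ℂ) m k)) * B m j := by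
    intro m
    rw [matExt_apply g hB, Finset.sum_mul]
  simp only [this]
  rw [Finset.sum_comm]
  refine Finset.sum_congr rfl fun k _ => ?_
  have h2 : ∑ m, (g (hB.eigenvalues k) : ℂ) *
      ((hB.eigenvectorUnitary : Matrix n n ℂ) i k *
        (starRingEnd ℂ) ((hB.eigenvectorUnitary : Matrix n n ℂ) m k)) * B m j
      = (g (hB.eigenvalues k) : ℂ) * (hB.eigenvectorUnitary : Matrix n n ℂ) i k *
          ∑ m, (starRingEnd ℂ) ((hB.eigenvectorUnitary : Matrix n n ℂ) m k) * B m j := by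
    rw [Finset.mul_sum]
    exact Finset.sum_congr rfl fun m _ => by ring
  rw [h2, eigen_eq_conj hB j k]
  push_cast
  ring

lemma matExt_poly (p : Polynomial ℝ) (hB : B.IsHermitian) :
    matExt (fun x => p.eval x) B = Polynomial.aeval B (p.map (algebraMap ℝ ℂ)) := by
  induction p using Polynomial.induction_on with
  | C c =>
      have : (fun x => Polynomial.eval x (Polynomial.C c)) = fun _ => c := by
        funext x; simp
      rw [this, matExt_const c hB]
      simp [Algebra.algebraMap_eq_smul_one]
  | add p q hp hq =>
      have : (fun x => Polynomial.eval x (p + q))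
          = fun x => Polynomial.eval x p + Polynomial.eval x q := by
        funext x; simp
      rw [this, matExt_add_fun _ _ hB, hp, hq]
      simp
  | monomial m c hm =>
      have : (fun x => Polynomial.eval x (Polynomial.C c * Polynomial.X ^ (m + 1)))
          = fun x => Polynomial.eval x (Polynomial.C c * Polynomial.X ^ m) * x := by
        funext x; simp [pow_succ]; ring
      rw [this, matExt_mul_id _ hB, hm]
      have e : (Polynomial.map (algebraMap ℝ ℂ) (Polynomial.C c * Polynomial.X ^ (m+1)))
          = Polynomial.map (algebraMap ℝ ℂ) (Polynomial.C c * Polynomial.X ^ m)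
            * Polynomial.X := by
        simp [Polynomial.map_mul, pow_succ, mul_assoc]
      rw [e, _root_.map_mul, Polynomial.aeval_X]

lemma hermA (t : n → ℝ) (H : Matrix n n ℂ) (hH : H.IsHermitian) (α : ℝ) :
    (Matrix.diagonal (fun i => (t i:ℂ)) + (α:ℂ) • H).IsHermitian := by
  apply Matrix.IsHermitian.add
  · rw [Matrix.IsHermitian, Matrix.diagonal_conjTranspose]
    have : (star fun i => (t i : ℂ)) = fun i => (t i:ℂ) := by
      funext i
      simp [Complex.star_def, Complex.conj_ofReal]
    rw [this]
  · rw [Matrix.IsHermitian, Matrix.conjTranspose_smul, hH]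
    congr 1
    rw [Complex.star_def, Complex.conj_ofReal]

lemma aeval_entry_continuous (t : n → ℝ) (H : Matrix n n ℂ) (q : Polynomial ℂ) (i j : n) :
    Continuous fun α : ℝ =>
      (Polynomial.aeval (Matrix.diagonal (fun i => (t i:ℂ)) + (α:ℂ) • H) q
        : Matrix n n ℂ) i j := by
  induction q using Polynomial.induction_on generalizing i j with
  | C c => simp only [Polynomial.aeval_C]; exact continuous_const
  | add p q hp hq =>
      simp only [map_add, Matrix.add_apply]
      exact (hp i j).add (hq i j)
  | monomial m c hm =>
      have key : ∀ α : ℝ, (Polynomial.aeval (Matrix.diagonal (fun i => (t i:ℂ)) + (α:ℂ) • H)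
            (Polynomial.C c * Polynomial.X ^ (m + 1)) : Matrix n n ℂ) i j
          = ∑ l, (Polynomial.aeval (Matrix.diagonal (fun i => (t i:ℂ)) + (α:ℂ) • H)
              (Polynomial.C c * Polynomial.X ^ m) : Matrix n n ℂ) i l *
              ((if l = j then (t l : ℂ) else 0) + (α:ℂ) * H l j) := by
        intro α
        have : (Polynomial.C c * Polynomial.X ^ (m + 1) : Polynomial ℂ)
            = Polynomial.C c * Polynomial.X ^ m * Polynomial.X := by ring
        rw [this, _root_.map_mul, Polynomial.aeval_X, Matrix.mul_apply]
        refine Finset.sum_congr rfl fun l _ => ?_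
        simp [Matrix.add_apply, Matrix.smul_apply, Matrix.diagonal_apply, smul_eq_mul]
      simp only [key]
      apply continuous_finset_sum
      intro l _
      exact (hm i l).mul (continuous_const.add (Complex.continuous_ofReal.mul continuous_const))


lemma matExt_entry_continuousAt (a b : ℝ) (t : n → ℝ) (ht : ∀ i, t i ∈ Set.Ioo a b)
    (H : Matrix n n ℂ) (hH : H.IsHermitian) (g : ℝ → ℝ) (hg : ContinuousOn g (Set.Ioo a b))
    (i j : n) :
    ContinuousAt (fun α : ℝ =>
      matExt g (Matrix.diagonal (fun l => (t l:ℂ)) + (α:ℂ) • H) i j) 0 := by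
  haveI : Nonempty n := ⟨i⟩
  set C : ℝ := ∑ m, ∑ l, ‖H l m‖ with hCdef
  have hC0 : 0 ≤ C :=
    Finset.sum_nonneg fun _ _ => Finset.sum_nonneg fun _ _ => norm_nonneg _
  set m₀ : ℝ := Finset.univ.inf' Finset.univ_nonempty t with hm₀def
  set M₀ : ℝ := Finset.univ.sup' Finset.univ_nonempty t with hM₀def
  have hm₀ : a < m₀ := by
    obtain ⟨i₀, -, h⟩ := Finset.exists_mem_eq_inf' Finset.univ_nonempty t
    rw [hm₀def, h]
    exact (ht i₀).1
  have hM₀ : M₀ < b := by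
    obtain ⟨i₀, -, h⟩ := Finset.exists_mem_eq_sup' Finset.univ_nonempty t
    rw [hM₀def, h]
    exact (ht i₀).2
  have hm₀le : ∀ k, m₀ ≤ t k := fun k => Finset.inf'_le t (Finset.mem_univ k)
  have hleM₀ : ∀ k, t k ≤ M₀ := fun k => Finset.le_sup' t (Finset.mem_univ k)
  have hmM : m₀ ≤ M₀ := le_trans (hm₀le (Classical.arbitrary n)) (hleM₀ _)
  set ρ : ℝ := min (m₀ - a) (b - M₀) / 2 with hρdef
  have hρ : 0 < ρ := by
    have := lt_min (by linarith : (0:ℝ) < m₀ - a) (by linarith : (0:ℝ) < b - M₀)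
    positivity
  have hρ1 : ρ ≤ (m₀ - a) / 2 := by
    have := min_le_left (m₀ - a) (b - M₀); rw [hρdef]; linarith
  have hρ2 : ρ ≤ (b - M₀) / 2 := by
    have := min_le_right (m₀ - a) (b - M₀); rw [hρdef]; linarith
  have hIcc : Set.Icc (m₀ - ρ) (M₀ + ρ) ⊆ Set.Ioo a b := by
    intro x hx
    obtain ⟨h1, h2⟩ := hx
    constructor <;> [linarith; linarith]
  set δ₀ : ℝ := ρ / (C + 1) with hδ₀def
  have hδ₀ : 0 < δ₀ := by positivity
  have loc : ∀ α : ℝ, |α| ≤ δ₀ → ∀ k,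
      (hermA t H hH α).eigenvalues k ∈ Set.Icc (m₀ - ρ) (M₀ + ρ) := by
    intro α hα k
    obtain ⟨w, hw0, hw1, hest⟩ := eigenvalues_loc t H α (hermA t H hH α) k
    have hs1 : m₀ ≤ ∑ l, t l * w l := by
      calc m₀ = ∑ l, m₀ * w l := by rw [← Finset.mul_sum, hw1, mul_one]
        _ ≤ ∑ l, t l * w l :=
          Finset.sum_le_sum fun l _ => mul_le_mul_of_nonneg_right (hm₀le l) (hw0 l)
    have hs2 : ∑ l, t l * w l ≤ M₀ := by
      calc ∑ l, t l * w l ≤ ∑ l, M₀ * w l :=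
          Finset.sum_le_sum fun l _ => mul_le_mul_of_nonneg_right (hleM₀ l) (hw0 l)
        _ = M₀ := by rw [← Finset.mul_sum, hw1, mul_one]
    have hb : |α| * C ≤ ρ := by
      calc |α| * C ≤ δ₀ * (C + 1) :=
          mul_le_mul hα (by linarith) hC0 (le_of_lt hδ₀)
        _ = ρ := by rw [hδ₀def]; field_simp
    have habs := abs_le.mp hest
    constructor <;> [linarith [habs.1]; linarith [habs.2]]
  rw [Metric.continuousAt_iff]
  intro ε hε
  obtain ⟨p, hp⟩ := exists_polynomial_near_of_continuousOn (m₀ - ρ) (M₀ + ρ) g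
    (hg.mono hIcc) (ε/4) (by positivity)
  have hpc : Continuous fun α : ℝ =>
      (Polynomial.aeval (Matrix.diagonal (fun l => (t l:ℂ)) + (α:ℂ) • H)
        (p.map (algebraMap ℝ ℂ)) : Matrix n n ℂ) i j :=
    aeval_entry_continuous t H _ i j
  have hpc0 := hpc.continuousAt (x := 0)
  rw [Metric.continuousAt_iff] at hpc0
  obtain ⟨δ₁, hδ₁, hp1⟩ := hpc0 (ε/4) (by positivity)
  refine ⟨min δ₀ δ₁, lt_min hδ₀ hδ₁, ?_⟩
  intro α hα
  have hαd : |α| < min δ₀ δ₁ := by rwa [Real.dist_eq, sub_zero] at hα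
  have hα0 : |α| ≤ δ₀ := le_of_lt (lt_of_lt_of_le hαd (min_le_left _ _))
  have hα1 : dist α 0 < δ₁ := by
    rw [Real.dist_eq, sub_zero]; exact lt_of_lt_of_le hαd (min_le_right _ _)
  have key : ∀ β : ℝ, |β| ≤ δ₀ →
      dist (matExt g (Matrix.diagonal (fun l => (t l:ℂ)) + (β:ℂ) • H) i j)
        ((Polynomial.aeval (Matrix.diagonal (fun l => (t l:ℂ)) + (β:ℂ) • H)
          (p.map (algebraMap ℝ ℂ)) : Matrix n n ℂ) i j) ≤ ε/4 := by
    intro β hβ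
    rw [← matExt_poly p (hermA t H hH β), Complex.dist_eq]
    refine matExt_entry_dist g (fun x => p.eval x) (hermA t H hH β) (ε/4)
      (by positivity) ?_ i j
    intro k
    have hmu := loc β hβ k
    have h2 := hp _ hmu
    rw [abs_sub_comm] at h2
    exact le_of_lt h2
  calc dist (matExt g (Matrix.diagonal (fun l => (t l:ℂ)) + (α:ℂ) • H) i j)
        (matExt g (Matrix.diagonal (fun l => (t l:ℂ)) + ((0:ℝ):ℂ) • H) i j)
      ≤ dist (matExt g (Matrix.diagonal (fun l => (t l:ℂ)) + (α:ℂ) • H) i j)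
          ((Polynomial.aeval (Matrix.diagonal (fun l => (t l:ℂ)) + (α:ℂ) • H)
            (p.map (algebraMap ℝ ℂ)) : Matrix n n ℂ) i j)
        + dist ((Polynomial.aeval (Matrix.diagonal (fun l => (t l:ℂ)) + (α:ℂ) • H)
            (p.map (algebraMap ℝ ℂ)) : Matrix n n ℂ) i j)
          ((Polynomial.aeval (Matrix.diagonal (fun l => (t l:ℂ)) + ((0:ℝ):ℂ) • H)
            (p.map (algebraMap ℝ ℂ)) : Matrix n n ℂ) i j)
        + dist ((Polynomial.aeval (Matrix.diagonal (fun l => (t l:ℂ)) + ((0:ℝ):ℂ) • H)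
            (p.map (algebraMap ℝ ℂ)) : Matrix n n ℂ) i j)
          (matExt g (Matrix.diagonal (fun l => (t l:ℂ)) + ((0:ℝ):ℂ) • H) i j) :=
        dist_triangle4 _ _ _ _
    _ < ε := by
        have k1 := key α hα0
        have k2 := hp1 hα1
        have k3 := key 0 (by simp [le_of_lt hδ₀])
        rw [dist_comm] at k3
        linarith

lemma divDiff_continuousOn (f : ℝ → ℝ) (a b : ℝ) (hf : ContDiffOn ℝ 1 f (Set.Ioo a b))
    (x : ℝ) (hx : x ∈ Set.Ioo a b) :
    ContinuousOn (fun y => divDiff f x y) (Set.Ioo a b) := by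
  intro y hy
  rcases eq_or_ne y x with rfl | hyx
  · have hdiff : HasDerivAt f (deriv f y) y := by
      have h1 : DifferentiableOn ℝ f (Set.Ioo a b) := hf.differentiableOn one_ne_zero
      have h2 : DifferentiableAt ℝ f y := h1.differentiableAt (isOpen_Ioo.mem_nhds hy)
      exact h2.hasDerivAt
    have hslope := hasDerivAt_iff_tendsto_slope.mp hdiff
    rw [← continuousWithinAt_diff_self]
    have hmono : 𝓝[Set.Ioo a b \ {y}] y ≤ 𝓝[≠] y :=
      nhdsWithin_mono y (fun z hz => hz.2)
    have h3 : Filter.Tendsto (slope f y) (𝓝[Set.Ioo a b \ {y}] y) (𝓝 (deriv f y)) :=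
      hslope.mono_left hmono
    rw [ContinuousWithinAt, show divDiff f y y = deriv f y from if_pos rfl]
    refine h3.congr' ?_
    filter_upwards [self_mem_nhdsWithin] with z hz
    have hzx : y ≠ z := fun h => hz.2 (by simp [h.symm])
    rw [divDiff, if_neg hzx, slope_def_field, ← neg_div_neg_eq, neg_sub, neg_sub]
  · have hq : ContinuousWithinAt (fun z => (f x - f z) / (x - z)) (Set.Ioo a b) y := by
      apply ContinuousWithinAt.div
      · exact continuousWithinAt_const.sub (hf.continuousOn y hy)
      · exact continuousWithinAt_const.sub continuousWithinAt_id
      · exact sub_ne_zero.mpr (Ne.symm hyx)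
    refine hq.congr_of_eventuallyEq ?_ ?_
    · have hmem : {z | z ≠ x} ∈ 𝓝[Set.Ioo a b] y :=
        mem_nhdsWithin_of_mem_nhds ((isOpen_ne).mem_nhds hyx)
      filter_upwards [hmem] with z hz
      rw [divDiff, if_neg (Ne.symm hz)]
    · rw [divDiff, if_neg (Ne.symm hyx)]

lemma hasDerivAt_linearish (c : ℂ) (φ : ℝ → ℂ) (hφ : ContinuousAt φ 0) :
    HasDerivAt (fun α : ℝ => c + (α:ℂ) * φ α) (φ 0) 0 := by
  rw [hasDerivAt_iff_tendsto_slope]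
  have hφ' : Filter.Tendsto φ (𝓝[≠] 0) (𝓝 (φ 0)) :=
    hφ.tendsto.mono_left nhdsWithin_le_nhds
  refine hφ'.congr' ?_
  filter_upwards [self_mem_nhdsWithin] with y hy
  have hy' : (y:ℝ) ≠ 0 := hy
  rw [slope]
  simp only [sub_zero, Complex.ofReal_zero, zero_mul, add_zero, vsub_eq_sub]
  rw [add_sub_cancel_left, Complex.real_smul, Complex.ofReal_inv, ← mul_assoc,
    inv_mul_cancel₀ (Complex.ofReal_ne_zero.mpr hy'), one_mul]

end Aux

/-- For `T = Diag(t₁,…,tₙ)` with `tᵢ ∈ (a,b)`, `f` a `C¹` function on `(a,b)`, and `H`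
Hermitian, the map `α ↦ F(T + αH)` is differentiable at `0` with derivative `T_f ⊙ H`,
where `[T_f]_{ij} = f^{[1]}(tᵢ,tⱼ)` and `⊙` is the Hadamard product. -/
theorem matExt_hasDerivAt_diagonal {n : ℕ} (a b : ℝ) (f : ℝ → ℝ)
    (hf : ContDiffOn ℝ 1 f (Set.Ioo a b))
    (t : Fin n → ℝ) (ht : ∀ i, t i ∈ Set.Ioo a b)
    (H : Matrix (Fin n) (Fin n) ℂ) (hH : H.IsHermitian) :
    HasDerivAt
      (fun α : ℝ => matExt f (Matrix.diagonal (fun i => (t i : ℂ)) + (α : ℂ) • H))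
      (Matrix.hadamard (Matrix.of fun i j => (divDiff f (t i) (t j) : ℂ)) H) 0 := by
  refine hasDerivAt_pi.mpr fun i => ?_
  refine hasDerivAt_pi.mpr fun j => ?_
  have hfun : (fun α : ℝ => matExt f (Matrix.diagonal (fun l => (t l : ℂ)) + (α : ℂ) • H) i j)
      = fun α : ℝ => (f (t i) : ℂ) * (if i = j then 1 else 0)
          + (α:ℂ) * ∑ m, H i m * matExt (fun x => divDiff f (t i) x)
              (Matrix.diagonal (fun l => (t l : ℂ)) + (α : ℂ) • H) m j :=
    funext fun α => matExt_entry_eq f t H α (hermA t H hH α) i j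
  have hφc : ContinuousAt (fun α : ℝ => ∑ m, H i m * matExt (fun x => divDiff f (t i) x)
      (Matrix.diagonal (fun l => (t l : ℂ)) + (α : ℂ) • H) m j) 0 := by
    refine tendsto_finset_sum _ fun m _ => ?_
    exact Filter.Tendsto.const_mul _ (matExt_entry_continuousAt a b t ht H hH _
      (divDiff_continuousOn f a b hf (t i) (ht i)) m j)
  have hder := hasDerivAt_linearish ((f (t i) : ℂ) * (if i = j then 1 else 0)) _ hφc
  rw [hfun]
  convert hder using 1
  · rfl
  have ecomp : ∀ m, matExt (fun x => divDiff f (t i) x)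
      (Matrix.diagonal (fun l => (t l : ℂ)) + (((0:ℝ)):ℂ) • H) m j
      = (divDiff f (t i) (t m) : ℂ) * (if m = j then 1 else 0) := by
    intro m
    have h := matExt_entry_eq (fun x => divDiff f (t i) x) t H 0 (hermA t H hH 0) m j
    rw [h, Complex.ofReal_zero, zero_mul, add_zero]
  simp only [ecomp]
  rw [Matrix.hadamard_apply, Matrix.of_apply]
  simp only [mul_ite, mul_one, mul_zero, Finset.sum_ite_eq', Finset.mem_univ, if_true]
  ring
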